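/- arXiv:1405.5589 — 4 statements merged into one kernel-verified Lean document; each statement's English description precedes it below -/
import Mathlib

section
/- Let p ∈ [1,∞) with p ≠ 2 and let n ∈ ℕ. If an n×n complex matrix A is an isometry of ℓ^p_n (i.e., ‖Ax‖_p = ‖x‖_p for all x ∈ ℂ^n), then A is a complex permutation matrix: every entry of A is either zero or of modulus one, and each row and each column has exactly one nonzero entry. -/
open scoped BigOperators



/-- Strict superadditivity of `x ^ t` for `t > 1`. -/
lemma aux_rpow_lt (t x y : ℝ) (ht : 1 < t) (hx : 0 < x) (hy : 0 < y) :
    x ^ t + y ^ t < (x + y) ^ t := by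
  have hxy : (0:ℝ) < x + y := by linarith
  have hxe : x ^ t = x * x ^ (t - 1) := by
    have h := Real.rpow_add hx 1 (t - 1)
    rw [show (1:ℝ) + (t - 1) = t by ring, Real.rpow_one] at h
    exact h
  have hye : y ^ t = y * y ^ (t - 1) := by
    have h := Real.rpow_add hy 1 (t - 1)
    rw [show (1:ℝ) + (t - 1) = t by ring, Real.rpow_one] at h
    exact h
  have hse : (x + y) ^ t = (x + y) * (x + y) ^ (t - 1) := by
    have h := Real.rpow_add hxy 1 (t - 1)
    rw [show (1:ℝ) + (t - 1) = t by ring, Real.rpow_one] at h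
    exact h
  have h1 : x ^ (t - 1) < (x + y) ^ (t - 1) :=
    Real.rpow_lt_rpow hx.le (by linarith) (by linarith)
  have h2 : y ^ (t - 1) < (x + y) ^ (t - 1) :=
    Real.rpow_lt_rpow hy.le (by linarith) (by linarith)
  calc x ^ t + y ^ t = x * x ^ (t-1) + y * y ^ (t-1) := by rw [hxe, hye]
    _ < x * (x+y) ^ (t-1) + y * (x+y) ^ (t-1) := by
        exact add_lt_add (by exact (mul_lt_mul_iff_right₀ hx).2 h1) ((mul_lt_mul_iff_right₀ hy).2 h2)
    _ = (x + y) * (x + y) ^ (t-1) := by ring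
    _ = (x + y) ^ t := hse.symm

lemma aux_rpow_le (t x y : ℝ) (ht : 1 ≤ t) (hx : 0 ≤ x) (hy : 0 ≤ y) :
    x ^ t + y ^ t ≤ (x + y) ^ t := by
  have ht0 : t ≠ 0 := by linarith
  rcases eq_or_lt_of_le hx with rfl | hx'
  · simp [Real.zero_rpow ht0]
  rcases eq_or_lt_of_le hy with rfl | hy'
  · simp [Real.zero_rpow ht0]
  rcases eq_or_lt_of_le ht with rfl | ht'
  · simp
  · exact (aux_rpow_lt t x y ht' hx' hy').le

/-- Strict subadditivity of `x ^ t` for `0 < t < 1`. -/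
lemma aux_rpow_lt' (t x y : ℝ) (ht0 : 0 < t) (ht : t < 1) (hx : 0 < x) (hy : 0 < y) :
    (x + y) ^ t < x ^ t + y ^ t := by
  have hxt : (0:ℝ) < x ^ t := Real.rpow_pos_of_pos hx t
  have hyt : (0:ℝ) < y ^ t := Real.rpow_pos_of_pos hy t
  have h := aux_rpow_lt t⁻¹ (x ^ t) (y ^ t) (by rw [lt_inv_comm₀] <;> simpa) hxt hyt
  rw [Real.rpow_rpow_inv hx.le ht0.ne', Real.rpow_rpow_inv hy.le ht0.ne'] at h
  -- h : x + y < (x ^ t + y ^ t) ^ t⁻¹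
  have h2 := Real.rpow_lt_rpow (by positivity) h ht0
  rwa [Real.rpow_inv_rpow (by positivity) ht0.ne'] at h2

lemma aux_rpow_le' (t x y : ℝ) (ht0 : 0 < t) (ht : t ≤ 1) (hx : 0 ≤ x) (hy : 0 ≤ y) :
    (x + y) ^ t ≤ x ^ t + y ^ t := by
  rcases eq_or_lt_of_le hx with rfl | hx'
  · simp [Real.zero_rpow ht0.ne']
  rcases eq_or_lt_of_le hy with rfl | hy'
  · simp [Real.zero_rpow ht0.ne']
  rcases eq_or_lt_of_le ht with rfl | ht'
  · simp
  · exact (aux_rpow_lt' t x y ht0 ht' hx' hy').le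

lemma sq_rpow_half (p s : ℝ) (hs : 0 ≤ s) : (s * s) ^ (p / 2) = s ^ p := by
  have h : s * s = s ^ (2:ℝ) := by rw [Real.rpow_two]; ring
  rw [h, ← Real.rpow_mul hs]
  congr 1
  ring



/-- Convexity part: for `p ≥ 2`,
`2 * (‖a‖² + ‖b‖²)^(p/2) ≤ ‖a+b‖^p + ‖a-b‖^p`. -/
lemma conv_part (p : ℝ) (hp : 2 ≤ p) (a b : ℂ) :
    2 * ((‖a‖ * ‖a‖ + ‖b‖ * ‖b‖) ^ (p / 2)) ≤ ‖a + b‖ ^ p + ‖a - b‖ ^ p := by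
  have par := parallelogram_law_with_norm ℂ a b
  have hu : (0:ℝ) ≤ ‖a + b‖ * ‖a + b‖ := mul_nonneg (norm_nonneg _) (norm_nonneg _)
  have hv : (0:ℝ) ≤ ‖a - b‖ * ‖a - b‖ := mul_nonneg (norm_nonneg _) (norm_nonneg _)
  have cv := (convexOn_rpow (p := p/2) (by linarith)).2
    (Set.mem_Ici.2 hu) (Set.mem_Ici.2 hv)
    (by norm_num : (0:ℝ) ≤ 1/2) (by norm_num : (0:ℝ) ≤ 1/2) (by norm_num)
  simp only [smul_eq_mul] at cv
  have e1 : (1/2 : ℝ) * (‖a + b‖ * ‖a + b‖) + (1/2 : ℝ) * (‖a - b‖ * ‖a - b‖)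
      = ‖a‖ * ‖a‖ + ‖b‖ * ‖b‖ := by linarith
  rw [e1, sq_rpow_half p _ (norm_nonneg _), sq_rpow_half p _ (norm_nonneg _)] at cv
  linarith

/-- Concavity part: for `0 ≤ p ≤ 2`,
`‖a+b‖^p + ‖a-b‖^p ≤ 2 * (‖a‖² + ‖b‖²)^(p/2)`. -/
lemma conc_part (p : ℝ) (hp0 : 0 ≤ p) (hp : p ≤ 2) (a b : ℂ) :
    ‖a + b‖ ^ p + ‖a - b‖ ^ p ≤ 2 * ((‖a‖ * ‖a‖ + ‖b‖ * ‖b‖) ^ (p / 2)) := by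
  have par := parallelogram_law_with_norm ℂ a b
  have hu : (0:ℝ) ≤ ‖a + b‖ * ‖a + b‖ := mul_nonneg (norm_nonneg _) (norm_nonneg _)
  have hv : (0:ℝ) ≤ ‖a - b‖ * ‖a - b‖ := mul_nonneg (norm_nonneg _) (norm_nonneg _)
  have cv := (Real.concaveOn_rpow (p := p/2) (by linarith) (by linarith)).2
    (Set.mem_Ici.2 hu) (Set.mem_Ici.2 hv)
    (by norm_num : (0:ℝ) ≤ 1/2) (by norm_num : (0:ℝ) ≤ 1/2) (by norm_num)
  simp only [smul_eq_mul] at cv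
  have e1 : (1/2 : ℝ) * (‖a + b‖ * ‖a + b‖) + (1/2 : ℝ) * (‖a - b‖ * ‖a - b‖)
      = ‖a‖ * ‖a‖ + ‖b‖ * ‖b‖ := by linarith
  rw [e1, sq_rpow_half p _ (norm_nonneg _), sq_rpow_half p _ (norm_nonneg _)] at cv
  linarith


lemma key_ge (p : ℝ) (hp : 2 ≤ p) (a b : ℂ) :
    2 * (‖a‖ ^ p + ‖b‖ ^ p) ≤ ‖a + b‖ ^ p + ‖a - b‖ ^ p := by
  have h := aux_rpow_le (p/2) (‖a‖ * ‖a‖) (‖b‖ * ‖b‖) (by linarith)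
    (mul_nonneg (norm_nonneg _) (norm_nonneg _)) (mul_nonneg (norm_nonneg _) (norm_nonneg _))
  rw [sq_rpow_half p _ (norm_nonneg _), sq_rpow_half p _ (norm_nonneg _)] at h
  have h2 := conv_part p hp a b
  linarith

lemma key_gt (p : ℝ) (hp : 2 < p) (a b : ℂ) (ha : a ≠ 0) (hb : b ≠ 0) :
    2 * (‖a‖ ^ p + ‖b‖ ^ p) < ‖a + b‖ ^ p + ‖a - b‖ ^ p := by
  have ha' : 0 < ‖a‖ := norm_pos_iff.2 ha
  have hb' : 0 < ‖b‖ := norm_pos_iff.2 hb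
  have h := aux_rpow_lt (p/2) (‖a‖ * ‖a‖) (‖b‖ * ‖b‖) (by linarith)
    (by positivity) (by positivity)
  rw [sq_rpow_half p _ (norm_nonneg _), sq_rpow_half p _ (norm_nonneg _)] at h
  have h2 := conv_part p hp.le a b
  linarith

lemma key_le (p : ℝ) (hp0 : 0 < p) (hp : p ≤ 2) (a b : ℂ) :
    ‖a + b‖ ^ p + ‖a - b‖ ^ p ≤ 2 * (‖a‖ ^ p + ‖b‖ ^ p) := by
  have h := aux_rpow_le' (p/2) (‖a‖ * ‖a‖) (‖b‖ * ‖b‖) (by linarith) (by linarith)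
    (mul_nonneg (norm_nonneg _) (norm_nonneg _)) (mul_nonneg (norm_nonneg _) (norm_nonneg _))
  rw [sq_rpow_half p _ (norm_nonneg _), sq_rpow_half p _ (norm_nonneg _)] at h
  have h2 := conc_part p hp0.le hp a b
  linarith

lemma key_lt (p : ℝ) (hp0 : 0 < p) (hp : p < 2) (a b : ℂ) (ha : a ≠ 0) (hb : b ≠ 0) :
    ‖a + b‖ ^ p + ‖a - b‖ ^ p < 2 * (‖a‖ ^ p + ‖b‖ ^ p) := by
  have ha' : 0 < ‖a‖ := norm_pos_iff.2 ha
  have hb' : 0 < ‖b‖ := norm_pos_iff.2 hb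
  have h := aux_rpow_lt' (p/2) (‖a‖ * ‖a‖) (‖b‖ * ‖b‖) (by linarith) (by linarith)
    (by positivity) (by positivity)
  rw [sq_rpow_half p _ (norm_nonneg _), sq_rpow_half p _ (norm_nonneg _)] at h
  have h2 := conc_part p hp0.le hp.le a b
  linarith

/-- For `p ∈ [1,∞)`, `p ≠ 2`, every matrix which is an isometry of `ℓ^p_n`
is a complex permutation matrix. -/
theorem isometry_lp_is_complex_permutation
    (p : ℝ) (hp1 : 1 ≤ p) (hp2 : p ≠ 2) (n : ℕ)
    (A : Matrix (Fin n) (Fin n) ℂ)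
    (hiso : ∀ x : Fin n → ℂ,
      (∑ i, ‖A.mulVec x i‖ ^ p) ^ (1 / p) = (∑ i, ‖x i‖ ^ p) ^ (1 / p)) :
    ∃ (σ : Equiv.Perm (Fin n)) (lam : Fin n → ℂ),
      (∀ i, ‖lam i‖ = 1) ∧
      (∀ i j, A i j = if j = σ i then lam i else 0) := by
  have hp0 : 0 < p := by linarith
  -- Step 1: sums are equal
  have hsum : ∀ x : Fin n → ℂ, ∑ i, ‖A.mulVec x i‖ ^ p = ∑ i, ‖x i‖ ^ p := by
    intro x
    have h := hiso x
    rw [one_div] at h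
    have h1 : (0:ℝ) ≤ ∑ i, ‖A.mulVec x i‖ ^ p :=
      Finset.sum_nonneg fun i _ => Real.rpow_nonneg (norm_nonneg _) p
    have h2 : (0:ℝ) ≤ ∑ i, ‖x i‖ ^ p :=
      Finset.sum_nonneg fun i _ => Real.rpow_nonneg (norm_nonneg _) p
    calc ∑ i, ‖A.mulVec x i‖ ^ p
        = ((∑ i, ‖A.mulVec x i‖ ^ p) ^ p⁻¹) ^ p := (Real.rpow_inv_rpow h1 hp0.ne').symm
      _ = ((∑ i, ‖x i‖ ^ p) ^ p⁻¹) ^ p := by rw [h]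
      _ = ∑ i, ‖x i‖ ^ p := Real.rpow_inv_rpow h2 hp0.ne'
  -- Step 2: column sums
  have colsum : ∀ j, ∑ i, ‖A i j‖ ^ p = 1 := by
    intro j
    have h := hsum (Pi.single j 1)
    rw [Matrix.mulVec_single] at h
    simp only [Matrix.col_apply, Pi.smul_apply, op_smul_eq_mul, mul_one] at h
    rw [h, Finset.sum_eq_single j]
    · simp
    · intro i _ hij
      rw [Pi.single_eq_of_ne hij, norm_zero, Real.zero_rpow hp0.ne']
    · simp
  -- Step 3: two-point sums
  have twosum : ∀ (c : ℂ), ‖c‖ = 1 → ∀ j k : Fin n, j ≠ k →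
      ∑ i, ‖A i j + c * A i k‖ ^ p = 2 := by
    intro c hc j k hjk
    have h := hsum (Pi.single j 1 + Pi.single k c)
    rw [Matrix.mulVec_add, Matrix.mulVec_single, Matrix.mulVec_single] at h
    simp only [Pi.add_apply] at h
    have hL : ∀ i, ‖(A i j * 1) + (A i k * c)‖ ^ p = ‖A i j + c * A i k‖ ^ p := by
      intro i; rw [mul_one, mul_comm]
    have hR : ∀ i, ‖(Pi.single j (1:ℂ) : Fin n → ℂ) i + (Pi.single k c : Fin n → ℂ) i‖ ^ p
        = (if i = j then (1:ℝ) else 0) + (if i = k then 1 else 0) := by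
      intro i
      rcases eq_or_ne i j with rfl | hij
      · rw [if_pos rfl, if_neg hjk]
        simp [Pi.single_apply, hjk, Real.one_rpow]
      · rcases eq_or_ne i k with rfl | hik
        · rw [if_neg hij, if_pos rfl]
          have hcc : ‖c‖ = 1 := hc
          simp [Pi.single_apply, hij, hcc, Real.one_rpow]
        · rw [if_neg hij, if_neg hik]
          simp [Pi.single_apply, hij, hik, Real.zero_rpow hp0.ne']
    calc ∑ i, ‖A i j + c * A i k‖ ^ p
        = ∑ i, ‖(A i j * 1) + (A i k * c)‖ ^ p := by
          exact (Finset.sum_congr rfl fun i _ => hL i).symm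
      _ = ∑ i, ‖(Pi.single j (1:ℂ) : Fin n → ℂ) i + (Pi.single k c : Fin n → ℂ) i‖ ^ p := h
      _ = ∑ i, ((if i = j then (1:ℝ) else 0) + (if i = k then 1 else 0)) :=
          Finset.sum_congr rfl fun i _ => hR i
      _ = 2 := by
          rw [Finset.sum_add_distrib, Finset.sum_ite_eq' Finset.univ j fun _ => (1:ℝ),
            Finset.sum_ite_eq' Finset.univ k fun _ => (1:ℝ)]
          simp; norm_num
  -- Step 4: disjoint supports
  have hdisj : ∀ j k : Fin n, j ≠ k → ∀ i, A i j = 0 ∨ A i k = 0 := by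
    intro j k hjk i
    have hplus := twosum 1 (by simp) j k hjk
    have hminus := twosum (-1) (by simp) j k hjk
    simp only [one_mul] at hplus
    have hminus' : ∑ i, ‖A i j - A i k‖ ^ p = 2 := by
      rw [← hminus]; apply Finset.sum_congr rfl; intro i _
      congr 2; ring
    have hFsum : ∑ i, (‖A i j + A i k‖ ^ p + ‖A i j - A i k‖ ^ p)
        = ∑ i, 2 * (‖A i j‖ ^ p + ‖A i k‖ ^ p) := by
      rw [Finset.sum_add_distrib, hplus, hminus']
      have : ∑ i, 2 * (‖A i j‖ ^ p + ‖A i k‖ ^ p)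
          = 2 * (∑ i, ‖A i j‖ ^ p + ∑ i, ‖A i k‖ ^ p) := by
        rw [← Finset.sum_add_distrib, Finset.mul_sum]
      rw [this, colsum j, colsum k]; norm_num
    by_contra hcon
    push_neg at hcon
    obtain ⟨h1, h2⟩ := hcon
    rcases lt_or_gt_of_ne hp2 with hlt | hgt
    · -- p < 2 : pointwise ≤, strict at i
      have hle : ∀ m ∈ Finset.univ, ‖A m j + A m k‖ ^ p + ‖A m j - A m k‖ ^ p
          ≤ 2 * (‖A m j‖ ^ p + ‖A m k‖ ^ p) := fun m _ => key_le p hp0 hlt.le _ _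
      have heq := (Finset.sum_eq_sum_iff_of_le hle).1 hFsum i (Finset.mem_univ i)
      have := key_lt p hp0 hlt (A i j) (A i k) h1 h2
      linarith
    · have hle : ∀ m ∈ Finset.univ, 2 * (‖A m j‖ ^ p + ‖A m k‖ ^ p)
          ≤ ‖A m j + A m k‖ ^ p + ‖A m j - A m k‖ ^ p := fun m _ => key_ge p hgt.le _ _
      have heq := (Finset.sum_eq_sum_iff_of_le hle).1 hFsum.symm i (Finset.mem_univ i)
      have := key_gt p hgt (A i j) (A i k) h1 h2
      linarith
  -- Step 5: combinatorics
  classical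
  let supp : Fin n → Finset (Fin n) := fun j => Finset.univ.filter (fun i => A i j ≠ 0)
  have hsupp_mem : ∀ i j, i ∈ supp j ↔ A i j ≠ 0 := by
    intro i j; simp [supp]
  have hne : ∀ j, 1 ≤ (supp j).card := by
    intro j
    rw [Nat.one_le_iff_ne_zero, Ne, Finset.card_eq_zero]
    intro hempty
    have : ∑ i, ‖A i j‖ ^ p = 0 := by
      apply Finset.sum_eq_zero
      intro i _
      have : A i j = 0 := by
        by_contra hcon
        have := (hsupp_mem i j).2 hcon
        rw [hempty] at this
        exact absurd this (Finset.notMem_empty i)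
      rw [this, norm_zero, Real.zero_rpow hp0.ne']
    rw [colsum j] at this; norm_num at this
  have hpair : ∀ j ∈ Finset.univ, ∀ k ∈ Finset.univ, j ≠ k → Disjoint (supp j) (supp k) := by
    intro j _ k _ hjk
    rw [Finset.disjoint_left]
    intro i hij hik
    rcases hdisj j k hjk i with h | h
    · exact ((hsupp_mem i j).1 hij) h
    · exact ((hsupp_mem i k).1 hik) h
  have hcards : ∀ j, (supp j).card = 1 := by
    have hsum_le : ∑ j, (supp j).card ≤ n := by
      rw [← Finset.card_biUnion hpair]
      simpa using Finset.card_le_card (Finset.subset_univ (Finset.univ.biUnion supp))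
    have hsum_ge : (n : ℕ) ≤ ∑ j, (supp j).card := by
      calc n = ∑ _j : Fin n, 1 := by simp
        _ ≤ ∑ j, (supp j).card := Finset.sum_le_sum fun j _ => hne j
    have heq : ∑ _j : Fin n, 1 = ∑ j, (supp j).card := by
      have : ∑ _j : Fin n, 1 = n := by simp
      omega
    intro j
    exact ((Finset.sum_eq_sum_iff_of_le fun j _ => hne j).1 heq j (Finset.mem_univ j)).symm
  have hr : ∀ j, ∃ a, supp j = {a} := fun j => Finset.card_eq_one.mp (hcards j)
  choose r hrspec using hr
  have hrmem : ∀ j, A (r j) j ≠ 0 := by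
    intro j
    have : r j ∈ supp j := by rw [hrspec j]; exact Finset.mem_singleton_self _
    exact (hsupp_mem _ _).1 this
  have hzero : ∀ i j, i ≠ r j → A i j = 0 := by
    intro i j hij
    by_contra hcon
    have : i ∈ supp j := (hsupp_mem i j).2 hcon
    rw [hrspec j, Finset.mem_singleton] at this
    exact hij this
  have hrinj : Function.Injective r := by
    intro j k hjk
    by_contra hne'
    rcases hdisj j k hne' (r j) with h | h
    · exact hrmem j h
    · rw [hjk] at h; exact hrmem k h
  have hrbij : Function.Bijective r := Finite.injective_iff_bijective.mp hrinj
  let e : Equiv.Perm (Fin n) := Equiv.ofBijective r hrbij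
  have he : ∀ j, e j = r j := fun j => rfl
  refine ⟨e.symm, fun i => A i (e.symm i), ?_, ?_⟩
  · intro i
    have hcol : ∀ j, ‖A (r j) j‖ = 1 := by
      intro j
      have h1 : ∑ m, ‖A m j‖ ^ p = ‖A (r j) j‖ ^ p := by
        rw [Finset.sum_eq_single (r j)]
        · intro m _ hm
          rw [hzero m j hm, norm_zero, Real.zero_rpow hp0.ne']
        · simp
      have h2 : ‖A (r j) j‖ ^ p = 1 := by rw [← h1, colsum j]
      calc ‖A (r j) j‖ = (‖A (r j) j‖ ^ p) ^ p⁻¹ :=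
            (Real.rpow_rpow_inv (norm_nonneg _) hp0.ne').symm
        _ = 1 := by rw [h2, Real.one_rpow]
    have : r (e.symm i) = i := by rw [← he, Equiv.apply_symm_apply]
    calc ‖A i (e.symm i)‖ = ‖A (r (e.symm i)) (e.symm i)‖ := by rw [this]
      _ = 1 := hcol _
  · intro i j
    split_ifs with h
    · rw [h]
    · -- j ≠ e.symm i ⇒ A i j = 0
      apply hzero
      intro hcon
      apply h
      rw [hcon, ← he, Equiv.symm_apply_apply]
end

section
/- Let (Y,ν) be a σ-finite measure space, let S : Y → Y be a measurable map, let p ∈ [1,∞), let n ∈ ℕ, and let E ⊆ Y be a measurable set with 0 < ν(E) < ∞ such that the sets E, S⁻¹(E), …, S^{-(n-1)}(E) are pairwise disjoint. Then the linear map ψ_E : ℓ^p_n → L^p(Y,ν) defined by ψ_E(η) = ν(E)^{-1/p} ∑_{j=0}^{n-1} η_j · u_S^j(𝟙_E) is an isometry. -/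
open MeasureTheory
open scoped ENNReal BigOperators

private lemma lp_coeFn_sum {α E : Type*} [MeasurableSpace α] {μ : MeasureTheory.Measure α}
    [NormedAddCommGroup E] {p : ℝ≥0∞} {ι : Type*} (s : Finset ι) (f : ι → Lp E p μ) :
    ⇑(∑ i ∈ s, f i) =ᵐ[μ] fun y => ∑ i ∈ s, f i y := by
  induction s using Finset.cons_induction with
  | empty =>
    simp only [Finset.sum_empty]
    filter_upwards [Lp.coeFn_zero E p μ] with y hy using hy
  | cons a s ha ih =>
    filter_upwards [Lp.coeFn_add (f a) (∑ i ∈ s, f i), ih] with y h1 h2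
    rw [Finset.sum_cons, h1, Pi.add_apply, h2, Finset.sum_cons]

/-- If `E, S⁻¹(E), …, S^{-(n-1)}(E)` are pairwise disjoint and `0 < ν(E) < ∞`, then
`ψ_E(η) = ν(E)^{-1/p} ∑_j η_j u_S^j(𝟙_E)` is an isometry `ℓ^p_n → L^p(Y,ν)`. -/
theorem psiE_isometry
    {Y : Type*} [MeasurableSpace Y] (ν : Measure Y) [SigmaFinite ν]
    (p : ℝ≥0∞) [Fact (1 ≤ p)] (hp : p ≠ ∞)
    (S : Y ≃ Y) (hS : Measurable S) (hS' : Measurable S.symm)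
    (hnull : ∀ F : Set Y, MeasurableSet F → (ν (⇑S ⁻¹' F) = 0 ↔ ν F = 0))
    (uS : Lp ℂ p ν ≃ₗᵢ[ℂ] Lp ℂ p ν)
    (huS : ∀ f : Lp ℂ p ν, ∀ᵐ y ∂ν,
      uS f y = ((ν.map S).rnDeriv ν y).toReal ^ (1 / p.toReal) • f (S.symm y))
    (n : ℕ) (E : Set Y) (hE : MeasurableSet E) (hEpos : 0 < ν E) (hEfin : ν E ≠ ∞)
    (hdisj : ∀ i j : Fin n, i ≠ j →
      Disjoint ((⇑S)^[(i : ℕ)] ⁻¹' E) ((⇑S)^[(j : ℕ)] ⁻¹' E)) :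
    ∀ η : PiLp p (fun _ : Fin n => ℂ),
      ‖(((ν E).toReal ^ (1 / p.toReal))⁻¹ : ℝ) •
        ∑ j : Fin n, η j • (⇑uS)^[(j : ℕ)] (indicatorConstLp p hE hEfin (1 : ℂ))‖
        = ‖η‖ := by
  intro η
  have hp1 : 1 ≤ p := Fact.out
  have hp0 : p ≠ 0 := fun h => by simp [h] at hp1
  have hq : 0 < p.toReal := ENNReal.toReal_pos hp0 hp
  set q := p.toReal with hqdef
  set g : Lp ℂ p ν := indicatorConstLp p hE hEfin (1 : ℂ) with hgdef
  set G : ℕ → Lp ℂ p ν := fun j => (⇑uS)^[j] g with hGdef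
  -- pulling back a.e. statements along S.symm
  have pull : ∀ {P : Y → Prop}, (∀ᵐ x ∂ν, P x) → ∀ᵐ y ∂ν, P (S.symm y) := by
    intro P h
    obtain ⟨N, hsub, hNm, hN0⟩ := exists_measurable_superset_of_null (ae_iff.mp h)
    have hpre : ⇑S ⁻¹' (⇑S.symm ⁻¹' N) = N := by ext x; simp
    have h1 : ν (⇑S.symm ⁻¹' N) = 0 :=
      (hnull _ (hS' hNm)).mp (by rw [hpre]; exact hN0)
    refine ae_iff.mpr (measure_mono_null ?_ h1)
    intro y hy
    exact hsub hy
  -- supports of the iterates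
  have hsupp : ∀ j : ℕ, ∀ᵐ y ∂ν, y ∉ (⇑S.symm)^[j] ⁻¹' E → G j y = 0 := by
    intro j
    induction j with
    | zero =>
      have hgcoe : ⇑g =ᵐ[ν] E.indicator (fun _ => (1 : ℂ)) := indicatorConstLp_coeFn
      filter_upwards [hgcoe] with y hy hyE
      simp only [Function.iterate_zero, Set.preimage_id, id] at hyE
      simp only [hGdef, Function.iterate_zero, id]
      rw [hy, Set.indicator_of_notMem hyE]
    | succ j ih =>
      have hGe : G (j + 1) = uS (G j) := Function.iterate_succ_apply' _ _ _
      filter_upwards [huS (G j), pull ih] with y hy1 hy2 hyE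
      have hmem : S.symm y ∉ (⇑S.symm)^[j] ⁻¹' E := by
        intro hmem
        exact hyE (by simpa [Set.mem_preimage, Function.iterate_succ_apply] using hmem)
      rw [hGe, hy1, hy2 hmem, smul_zero]
  -- disjointness in terms of S.symm
  have hdisj' : ∀ i j : Fin n, i ≠ j →
      Disjoint ((⇑S.symm)^[(i : ℕ)] ⁻¹' E) ((⇑S.symm)^[(j : ℕ)] ⁻¹' E) := by
    intro i j hij
    have key : ∀ a b : ℕ, ∀ z : Y, (⇑S)^[a] ((⇑S.symm)^[a + b] z) = (⇑S.symm)^[b] z := by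
      intro a b z
      rw [Function.iterate_add_apply]
      exact (Function.RightInverse.iterate S.right_inv a) _
    rw [Set.disjoint_left]
    intro x hxi hxj
    have hmem1 : (⇑S.symm)^[(i : ℕ) + (j : ℕ)] x ∈ (⇑S)^[(i : ℕ)] ⁻¹' E := by
      rw [Set.mem_preimage, key]; exact hxj
    have hmem2 : (⇑S.symm)^[(i : ℕ) + (j : ℕ)] x ∈ (⇑S)^[(j : ℕ)] ⁻¹' E := by
      rw [Set.mem_preimage, show (i : ℕ) + (j : ℕ) = (j : ℕ) + (i : ℕ) from Nat.add_comm _ _,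
        key]
      exact hxi
    exact Set.disjoint_left.mp (hdisj i j hij) hmem1 hmem2
  -- norms of the iterates
  have hGnorm : ∀ j : ℕ, eLpNorm (⇑(G j)) p ν = eLpNorm (⇑g) p ν := by
    intro j
    induction j with
    | zero => rfl
    | succ j ih =>
      have hGe : G (j + 1) = uS (G j) := Function.iterate_succ_apply' _ _ _
      have hnm := uS.norm_map (G j)
      rw [Lp.norm_def, Lp.norm_def] at hnm
      have := (ENNReal.toReal_eq_toReal_iff' (Lp.eLpNorm_ne_top _) (Lp.eLpNorm_ne_top _)).mp hnm
      rw [hGe, this, ih]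
  have hgnorm : eLpNorm (⇑g) p ν = (ν E) ^ (1 / q) := by
    rw [eLpNorm_congr_ae indicatorConstLp_coeFn, eLpNorm_indicator_const hE hp0 hp]
    simp
    rfl
  have hint : ∀ j : ℕ, ∫⁻ y, (‖G j y‖₊ : ℝ≥0∞) ^ q ∂ν = ν E := by
    intro j
    have h1 : eLpNorm (⇑(G j)) p ν = (ν E) ^ (1 / q) := (hGnorm j).trans hgnorm
    rw [eLpNorm_eq_lintegral_rpow_enorm_toReal hp0 hp] at h1
    simp only [enorm_eq_nnnorm, ← hqdef] at h1
    have h2 := congrArg (· ^ q) h1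
    simpa [← ENNReal.rpow_mul, one_div, inv_mul_cancel₀ hq.ne'] using h2
  -- coercion of the sum
  set Φ : Lp ℂ p ν := ∑ j : Fin n, η j • G (j : ℕ) with hΦdef
  have hΦcoe : ∀ᵐ y ∂ν, Φ y = ∑ j : Fin n, η j • G (j : ℕ) y := by
    have h1 : ⇑Φ =ᵐ[ν] fun y => ∑ j : Fin n, (η j • G (j : ℕ)) y := by
      rw [hΦdef]
      exact lp_coeFn_sum _ _
    have h2 : ∀ j : Fin n, ⇑(η j • G (j : ℕ)) =ᵐ[ν] η j • ⇑(G (j : ℕ)) :=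
      fun j => Lp.coeFn_smul _ _
    filter_upwards [h1, ae_all_iff.mpr h2] with y hy1 hy2
    rw [hy1]
    exact Finset.sum_congr rfl fun j _ => by rw [hy2 j]; rfl
  -- pointwise a.e. identity
  have hpt : ∀ᵐ y ∂ν, (‖Φ y‖₊ : ℝ≥0∞) ^ q
      = ∑ j : Fin n, (‖η j‖₊ : ℝ≥0∞) ^ q * (‖G (j : ℕ) y‖₊ : ℝ≥0∞) ^ q := by
    filter_upwards [hΦcoe, ae_all_iff.mpr (fun j : Fin n => hsupp (j : ℕ))] with y hy1 hy2
    rw [hy1]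
    by_cases hex : ∃ i : Fin n, y ∈ (⇑S.symm)^[(i : ℕ)] ⁻¹' E
    · obtain ⟨i, hi⟩ := hex
      have hzero : ∀ j : Fin n, j ≠ i → G (j : ℕ) y = 0 := by
        intro j hji
        refine hy2 j (fun hmem => ?_)
        exact Set.disjoint_left.mp (hdisj' j i hji) hmem hi
      rw [Finset.sum_eq_single_of_mem i (Finset.mem_univ i)
        (fun j _ hji => by rw [hzero j hji, smul_zero]),
        Finset.sum_eq_single_of_mem i (Finset.mem_univ i)
        (fun j _ hji => by rw [hzero j hji]; simp [ENNReal.zero_rpow_of_pos hq])]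
      rw [← ENNReal.mul_rpow_of_nonneg _ _ hq.le]
      congr 1
      rw [← ENNReal.coe_mul]
      congr 1
      rw [← nnnorm_smul]
    · push_neg at hex
      have hzero : ∀ j : Fin n, G (j : ℕ) y = 0 := fun j => hy2 j (hex j)
      simp [hzero, ENNReal.zero_rpow_of_pos hq]
  -- compute the eLpNorm of Φ
  have hΦint : ∫⁻ y, (‖Φ y‖₊ : ℝ≥0∞) ^ q ∂ν
      = ∑ j : Fin n, (‖η j‖₊ : ℝ≥0∞) ^ q * ν E := by
    rw [lintegral_congr_ae hpt, lintegral_finset_sum']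
    · exact Finset.sum_congr rfl fun j _ => by
        rw [lintegral_const_mul'' _ (((Lp.aestronglyMeasurable (G (j : ℕ))).aemeasurable.nnnorm.coe_nnreal_ennreal).pow_const q), hint]
    · intro j _
      exact AEMeasurable.const_mul
        (((Lp.aestronglyMeasurable (G (j : ℕ))).aemeasurable.nnnorm.coe_nnreal_ennreal).pow_const q) _
  have hΦnorm : eLpNorm (⇑Φ) p ν = (∑ j : Fin n, (‖η j‖₊ : ℝ≥0∞) ^ q * ν E) ^ (1 / q) := by
    rw [eLpNorm_eq_lintegral_rpow_enorm_toReal hp0 hp]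
    simp only [enorm_eq_nnnorm]
    rw [hΦint]
  -- final real computation
  have hc : (0 : ℝ) < (ν E).toReal ^ (1 / q) :=
    Real.rpow_pos_of_pos (ENNReal.toReal_pos hEpos.ne' hEfin) _
  rw [norm_smul]
  rw [Lp.norm_def, hΦnorm]
  rw [← ENNReal.toReal_rpow]
  rw [ENNReal.toReal_sum (fun j _ => ENNReal.mul_ne_top
    (ENNReal.rpow_ne_top_of_nonneg hq.le ENNReal.coe_ne_top) hEfin)]
  have hterm : ∀ j : Fin n, ((‖η j‖₊ : ℝ≥0∞) ^ q * ν E).toReal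
      = ‖η j‖ ^ q * (ν E).toReal := by
    intro j
    rw [ENNReal.toReal_mul, ← ENNReal.toReal_rpow]
    simp
  simp only [hterm]
  rw [← Finset.sum_mul]
  rw [Real.mul_rpow (Finset.sum_nonneg fun j _ => by positivity) ENNReal.toReal_nonneg]
  rw [PiLp.norm_eq_sum hq]
  rw [norm_inv, Real.norm_eq_abs, abs_of_pos hc]
  field_simp
  rfl
end

section
/- Let (X,𝒜) be a measurable space, μ a σ-finite measure on it, T : X → X an invertible measure class preserving transformation, and suppose X decomposes into T-invariant measurable sets X_n (n ∈ ℕ) on which every point has exact period n, together with a T-invariant set X_∞. For n ∈ ℕ choose a measurable cross-section X_{n,0} ⊆ X_n meeting each orbit once and set ν_n(E) = ∑_{j=0}^{n-1} μ(T^{-j}(E) ∩ X_{n,0}). Then the measure ν = ∑_n ν_n + μ|_{X_∞} satisfies: (1) ν(T(E)) = ν(E) for every measurable E ⊆ X ∖ X_∞; and (2) ν(E) = 0 if and only if μ(E) = 0, for every measurable E ⊆ X. -/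
open MeasureTheory
open scoped BigOperators ENNReal

/-- The measure `ν = ∑ₙ νₙ + μ|_{X_∞}` built from cross-sections is `T`-invariant off
`X_∞` and has the same null sets as `μ`. -/
theorem equivalent_invariant_measure
    {X : Type*} [MeasurableSpace X] (μ : Measure X) [SigmaFinite μ]
    (T : X ≃ X) (hT : Measurable T) (hT' : Measurable T.symm)
    (hnull : ∀ F : Set X, MeasurableSet F → (μ (⇑T ⁻¹' F) = 0 ↔ μ F = 0))
    (Xn : ℕ → Set X) (Xinf : Set X)
    (hXnmeas : ∀ n, MeasurableSet (Xn n)) (hXinfmeas : MeasurableSet Xinf)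
    (hdisj : ∀ m n : ℕ, m ≠ n → Disjoint (Xn m) (Xn n))
    (hdisjinf : ∀ n, Disjoint (Xn n) Xinf)
    (hcover : (⋃ n, Xn n) ∪ Xinf = Set.univ)
    (hTinv : ∀ n, ⇑T ⁻¹' Xn n = Xn n) (hTinvinf : ⇑T ⁻¹' Xinf = Xinf)
    (hper : ∀ n : ℕ, ∀ x ∈ Xn n, 1 ≤ n ∧ (⇑T)^[n] x = x ∧
      ∀ k : ℕ, 1 ≤ k → k < n → (⇑T)^[k] x ≠ x)
    (hperinf : ∀ x ∈ Xinf, ∀ k : ℕ, 1 ≤ k → (⇑T)^[k] x ≠ x)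
    (X0 : ℕ → Set X) (hX0meas : ∀ n, MeasurableSet (X0 n))
    (hX0sub : ∀ n, X0 n ⊆ Xn n)
    (hX0cross : ∀ n : ℕ, ∀ x ∈ Xn n, ∃! y : X, y ∈ X0 n ∧ ∃ k : ℤ, (⇑(T ^ k)) x = y)
    (ν : Set X → ℝ≥0∞)
    (hν : ∀ E : Set X, ν E =
      (∑' n : ℕ, ∑ j ∈ Finset.range n, μ ((⇑T)^[j] ⁻¹' E ∩ X0 n)) + μ (E ∩ Xinf)) :
    (∀ E : Set X, MeasurableSet E → E ⊆ Xinfᶜ → ν (⇑T '' E) = ν E) ∧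
    (∀ E : Set X, MeasurableSet E → (ν E = 0 ↔ μ E = 0)) := by
  classical
  -- measurability of iterates
  have hTiter : ∀ j : ℕ, Measurable ((⇑T)^[j]) := fun j => hT.iterate j
  have hTiter' : ∀ j : ℕ, Measurable ((⇑T.symm)^[j]) := fun j => hT'.iterate j
  -- preimages under iterates of null sets are null
  have hiterpre : ∀ (j : ℕ) (F : Set X), MeasurableSet F → μ F = 0 →
      μ ((⇑T)^[j] ⁻¹' F) = 0 := by
    intro j
    induction j with
    | zero => intro F hF h; simpa using h
    | succ j ih =>
      intro F hF h
      rw [Function.iterate_succ', Set.preimage_comp]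
      exact ih _ (hT hF) ((hnull F hF).mpr h)
  -- same for T.symm
  have hsymm1 : ∀ F : Set X, MeasurableSet F → μ F = 0 → μ (⇑T.symm ⁻¹' F) = 0 := by
    intro F hF h
    have h2 := hnull (⇑T.symm ⁻¹' F) (hT' hF)
    have h3 : ⇑T ⁻¹' (⇑T.symm ⁻¹' F) = F := by ext x; simp
    rw [h3] at h2
    exact h2.mp h
  have hsymmiter : ∀ (j : ℕ) (F : Set X), MeasurableSet F → μ F = 0 →
      μ ((⇑T.symm)^[j] ⁻¹' F) = 0 := by
    intro j
    induction j with
    | zero => intro F hF h; simpa using h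
    | succ j ih =>
      intro F hF h
      rw [Function.iterate_succ', Set.preimage_comp]
      exact ih _ (hT' hF) (hsymm1 _ hF h)
  -- image under iterates expressed as preimage of the inverse iterate
  have key : ∀ (j : ℕ) (F : Set X), (⇑T)^[j] '' F = (⇑T.symm)^[j] ⁻¹' F := by
    intro j F
    exact congrFun (Set.image_eq_preimage_of_inverse
      (Function.LeftInverse.iterate T.symm_apply_apply j)
      (Function.LeftInverse.iterate T.apply_symm_apply j)) F
  have himg : ∀ (j : ℕ) (F : Set X), MeasurableSet F → μ F = 0 →
      μ ((⇑T)^[j] '' F) = 0 := by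
    intro j F hF h
    rw [key]
    exact hsymmiter j F hF h
  -- iterates of a point of X0 n stay periodic
  have hX0per : ∀ n : ℕ, ∀ y ∈ X0 n, 1 ≤ n ∧ (⇑T)^[n] y = y := fun n y hy =>
    ⟨(hper n y (hX0sub n hy)).1, (hper n y (hX0sub n hy)).2.1⟩
  -- reduce zpow to iterate, for periodic points
  have hzpow : ∀ (n : ℕ) (y : X), 1 ≤ n → (⇑T)^[n] y = y → ∀ k : ℤ,
      ∃ j : ℕ, j < n ∧ (⇑(T ^ k)) y = (⇑T)^[j] y := by
    intro n y hn hy k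
    -- first: some natural j
    have step : ∀ k : ℤ, ∃ j : ℕ, (⇑(T ^ k)) y = (⇑T)^[j] y := by
      intro k
      induction k using Int.induction_on with
      | zero => exact ⟨0, by simp⟩
      | succ k ih =>
        obtain ⟨j, hj⟩ := ih
        refine ⟨j + 1, ?_⟩
        have h1 : T ^ ((k : ℤ) + 1) = T * T ^ (k : ℤ) := by
          rw [add_comm, zpow_add, zpow_one]
        rw [h1, Equiv.Perm.mul_apply, hj, Function.iterate_succ_apply']
      | pred k ih =>
        obtain ⟨j, hj⟩ := ih
        have h1 : T ^ (-(k : ℤ) - 1) = T⁻¹ * T ^ (-(k : ℤ)) := by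
          rw [sub_eq_add_neg, add_comm, zpow_add, zpow_neg_one]
        rw [h1, Equiv.Perm.mul_apply, hj]
        cases j with
        | zero =>
          refine ⟨n - 1, ?_⟩
          have : T ((⇑T)^[n-1] y) = T ((T⁻¹ : X ≃ X) ((⇑T)^[0] y)) := by
            simp only [Function.iterate_zero, id_eq]
            rw [← Function.iterate_succ_apply' (⇑T) (n-1) y,
               Nat.succ_eq_add_one, Nat.sub_add_cancel hn, hy]
            simp [Equiv.Perm.inv_def]
          exact (T.injective this).symm
        | succ j =>
          refine ⟨j, ?_⟩
          rw [Function.iterate_succ_apply' (⇑T) j y]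
          simp [Equiv.Perm.inv_def]
    obtain ⟨j, hj⟩ := step k
    -- reduce j mod n
    have hmul : ∀ q : ℕ, (⇑T)^[n * q] y = y := by
      intro q
      induction q with
      | zero => simp
      | succ q ih =>
        rw [Nat.mul_succ, Function.iterate_add_apply, hy, ih]
    refine ⟨j % n, Nat.mod_lt _ hn, ?_⟩
    rw [hj]
    conv_lhs => rw [← Nat.mod_add_div j n]
    rw [Function.iterate_add_apply, hmul]
  constructor
  · -- invariance off Xinf
    intro E hE hEsub
    rw [hν, hν]
    have hEinf : E ∩ Xinf = ∅ := by
      apply Set.eq_empty_iff_forall_notMem.mpr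
      rintro x ⟨hx1, hx2⟩
      exact hEsub hx1 hx2
    have hTEinf : (⇑T '' E) ∩ Xinf = ∅ := by
      apply Set.eq_empty_iff_forall_notMem.mpr
      rintro x ⟨⟨y, hy1, hy2⟩, hx2⟩
      have : y ∈ Xinf := by rw [← hTinvinf]; show T y ∈ Xinf; rw [hy2]; exact hx2
      exact hEsub hy1 this
    rw [hEinf, hTEinf]
    congr 1
    apply tsum_congr
    intro n
    rcases n with _ | m
    · simp
    · -- n = m + 1
      -- j+1 term: T^[j+1] ⁻¹' (T '' E) = T^[j] ⁻¹' E
      have hsucc : ∀ j : ℕ, (⇑T)^[j+1] ⁻¹' (⇑T '' E) = (⇑T)^[j] ⁻¹' E := by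
        intro j
        rw [Function.iterate_succ', Set.preimage_comp, Set.preimage_image_eq E T.injective]
      -- 0 term
      have h0 : (⇑T '' E) ∩ X0 (m+1) = ((⇑T)^[m] ⁻¹' E) ∩ X0 (m+1) := by
        ext x
        constructor
        · rintro ⟨⟨y, hy1, hy2⟩, hx2⟩
          refine ⟨?_, hx2⟩
          have hp := (hX0per (m+1) x hx2).2
          have : (⇑T)^[m] x = y := by
            apply T.injective
            rw [hy2, ← Function.iterate_succ_apply' (⇑T) m x]
            exact hp
          show (⇑T)^[m] x ∈ E
          rw [this]; exact hy1
        · rintro ⟨hx1, hx2⟩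
          refine ⟨⟨(⇑T)^[m] x, hx1, ?_⟩, hx2⟩
          have hp := (hX0per (m+1) x hx2).2
          rw [Function.iterate_succ_apply' (⇑T) m x] at hp
          exact hp
      rw [Finset.sum_range_succ' (fun j => μ ((⇑T)^[j] ⁻¹' (⇑T '' E) ∩ X0 (m+1))) m,
          Finset.sum_range_succ (fun j => μ ((⇑T)^[j] ⁻¹' E ∩ X0 (m+1))) m]
      simp only [Function.iterate_zero, Set.preimage_id, Set.preimage_id', id_eq]
      rw [h0]
      congr 1
      exact Finset.sum_congr rfl fun j _ => by rw [hsucc j]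
  · -- equivalence of null sets
    intro E hE
    rw [hν]
    constructor
    · intro h
      rcases add_eq_zero.mp h with ⟨h1, h2⟩
      have h1' : ∀ n : ℕ, ∀ j ∈ Finset.range n, μ ((⇑T)^[j] ⁻¹' E ∩ X0 n) = 0 := by
        intro n j hj
        have := ENNReal.tsum_eq_zero.mp h1 n
        exact (Finset.sum_eq_zero_iff.mp this) j hj
      -- each E ∩ Xn n is null
      have hEn : ∀ n : ℕ, μ (E ∩ Xn n) = 0 := by
        intro n
        have hsub : E ∩ Xn n ⊆ ⋃ j ∈ Finset.range n, (⇑T)^[j] '' ((⇑T)^[j] ⁻¹' E ∩ X0 n) := by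
          rintro x ⟨hxE, hxn⟩
          obtain ⟨y, ⟨hy0, k, hk⟩, -⟩ := hX0cross n x hxn
          have hyper := hX0per n y hy0
          obtain ⟨j, hjn, hj⟩ := hzpow n y hyper.1 hyper.2 (-k)
          have hxy : (⇑T)^[j] y = x := by
            rw [← hj, ← hk]
            have : (T ^ (-k)) ((T ^ k) x) = ((T ^ (-k)) * (T ^ k)) x := rfl
            rw [this, ← zpow_add, neg_add_cancel, zpow_zero]
            rfl
          apply Set.mem_biUnion (Finset.mem_range.mpr hjn)
          exact ⟨y, ⟨by rw [Set.mem_preimage, hxy]; exact hxE, hy0⟩, hxy⟩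
        refine le_antisymm ?_ zero_le
        calc μ (E ∩ Xn n) ≤ μ (⋃ j ∈ Finset.range n, (⇑T)^[j] '' ((⇑T)^[j] ⁻¹' E ∩ X0 n)) :=
              measure_mono hsub
          _ ≤ ∑ j ∈ Finset.range n, μ ((⇑T)^[j] '' ((⇑T)^[j] ⁻¹' E ∩ X0 n)) :=
              measure_biUnion_finset_le _ _
          _ = 0 := by
              apply Finset.sum_eq_zero
              intro j hj
              exact himg j _ (((hTiter j) hE).inter (hX0meas n)) (h1' n j hj)
      -- cover
      have hcov : E ⊆ (⋃ n, E ∩ Xn n) ∪ (E ∩ Xinf) := by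
        intro x hx
        have : x ∈ (⋃ n, Xn n) ∪ Xinf := by rw [hcover]; trivial
        rcases this with h | h
        · obtain ⟨n, hn⟩ := Set.mem_iUnion.mp h
          exact Or.inl (Set.mem_iUnion.mpr ⟨n, hx, hn⟩)
        · exact Or.inr ⟨hx, h⟩
      refine le_antisymm ?_ zero_le
      calc μ E ≤ μ ((⋃ n, E ∩ Xn n) ∪ (E ∩ Xinf)) := measure_mono hcov
        _ ≤ μ (⋃ n, E ∩ Xn n) + μ (E ∩ Xinf) := measure_union_le _ _
        _ ≤ (∑' n, μ (E ∩ Xn n)) + μ (E ∩ Xinf) := by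
            gcongr; exact measure_iUnion_le _
        _ = 0 := by
            rw [h2]
            simp [hEn]
    · intro h
      have h1 : (∑' n : ℕ, ∑ j ∈ Finset.range n, μ ((⇑T)^[j] ⁻¹' E ∩ X0 n)) = 0 := by
        apply ENNReal.tsum_eq_zero.mpr
        intro n
        apply Finset.sum_eq_zero
        intro j _
        have : μ ((⇑T)^[j] ⁻¹' E) = 0 := hiterpre j E hE h
        exact le_antisymm (le_trans (measure_mono Set.inter_subset_left) this.le) zero_le
      have h2 : μ (E ∩ Xinf) = 0 :=
        le_antisymm (le_trans (measure_mono Set.inter_subset_left) h.le) zero_le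
      rw [h1, h2, add_zero]
end

section
/- Let (Y,ν) be a σ-finite measure space with ν(Y) > 0, let p ∈ [1,∞), let S : Y → Y be an invertible measure class preserving transformation with arbitrarily long strings, let h : Y → S¹ be measurable, and let w = m_h ∘ u_S be the resulting invertible isometry of L^p(Y,ν). Then for every finitely supported f : ℤ → ℂ, the operator norm of ∑_{n} f(n) wⁿ on L^p(Y,ν) is at least the norm of the convolution operator λ_p(f) on ℓ^p(ℤ): ‖∑ₙ f(n)wⁿ‖ ≥ ‖λ_p(f)‖_{B(ℓ^p(ℤ))}. -/
open MeasureTheory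
open scoped BigOperators ENNReal Pointwise

section Aux

variable {Y : Type*} [MeasurableSpace Y] {ν : Measure Y} {p : ℝ≥0∞}

/-- Coercion of a finite sum in `Lp` is a.e. the sum of coercions. -/
lemma aux_coeFn_sum {ι : Type*} (s : Finset ι) (g : ι → Lp ℂ p ν) :
    ∀ᵐ y ∂ν, (↑(∑ i ∈ s, g i) : Y → ℂ) y = ∑ i ∈ s, (g i : Y → ℂ) y := by
  classical
  induction s using Finset.induction_on with
  | empty =>
      filter_upwards [Lp.coeFn_zero (E := ℂ) (p := p) (μ := ν)] with y hy
      simpa using hy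
  | insert _ _ hnot ih =>
      rename_i a s'
      filter_upwards [Lp.coeFn_add (g a) (∑ i ∈ s', g i), ih] with y h1 h2
      rw [Finset.sum_insert hnot, Finset.sum_insert hnot, h1, Pi.add_apply, h2]

lemma aux_lintegral_eq (hp0 : p ≠ 0) (hp : p ≠ ∞) (u : Lp ℂ p ν) :
    ∫⁻ y, (‖(u : Y → ℂ) y‖₊ : ℝ≥0∞) ^ p.toReal ∂ν = eLpNorm u p ν ^ p.toReal := by
  have hpr : 0 < p.toReal := ENNReal.toReal_pos hp0 hp
  rw [eLpNorm_eq_lintegral_rpow_enorm_toReal hp0 hp, ← ENNReal.rpow_mul, one_div,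
    inv_mul_cancel₀ hpr.ne', ENNReal.rpow_one]
  rfl

lemma aux_norm_pow_eq (hp0 : p ≠ 0) (hp : p ≠ ∞) (u : Lp ℂ p ν) :
    ‖u‖ ^ p.toReal = (∫⁻ y, (‖(u : Y → ℂ) y‖₊ : ℝ≥0∞) ^ p.toReal ∂ν).toReal := by
  rw [aux_lintegral_eq hp0 hp, Lp.norm_def, ENNReal.toReal_rpow]

/-- `Lp` norm of a sum of a.e.-disjointly supported functions. -/
lemma aux_disjoint_sum (hp0 : p ≠ 0) (hp : p ≠ ∞) {ι : Type*} [DecidableEq ι]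
    (s : Finset ι) (g : ι → Lp ℂ p ν) (A : ι → Set Y)
    (hdisj : ∀ i ∈ s, ∀ j ∈ s, i ≠ j → Disjoint (A i) (A j))
    (hsupp : ∀ i ∈ s, ∀ᵐ y ∂ν, y ∉ A i → (g i : Y → ℂ) y = 0) :
    ‖(∑ i ∈ s, g i : Lp ℂ p ν)‖ ^ p.toReal = ∑ i ∈ s, ‖g i‖ ^ p.toReal := by
  have hpr : 0 < p.toReal := ENNReal.toReal_pos hp0 hp
  have hae : ∀ᵐ y ∂ν, ∀ i ∈ s, (y ∉ A i → (g i : Y → ℂ) y = 0) :=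
    (ae_ball_iff s.countable_toSet).2 hsupp
  have key : ∀ᵐ y ∂ν, (‖(↑(∑ i ∈ s, g i) : Y → ℂ) y‖₊ : ℝ≥0∞) ^ p.toReal
      = ∑ i ∈ s, (‖(g i : Y → ℂ) y‖₊ : ℝ≥0∞) ^ p.toReal := by
    filter_upwards [hae, aux_coeFn_sum s g] with y hy hsum
    rw [hsum]
    by_cases hall : ∀ i ∈ s, (g i : Y → ℂ) y = 0
    · rw [Finset.sum_eq_zero hall, Finset.sum_eq_zero]
      · simp [ENNReal.zero_rpow_of_pos hpr]
      · intro i hi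
        rw [hall i hi]
        simp [ENNReal.zero_rpow_of_pos hpr]
    · push_neg at hall
      obtain ⟨i₀, hi₀s, hi₀⟩ := hall
      have hyA : y ∈ A i₀ := by
        by_contra hc; exact hi₀ (hy i₀ hi₀s hc)
      have hz : ∀ j ∈ s, j ≠ i₀ → (g j : Y → ℂ) y = 0 := by
        intro j hj hne
        by_contra hc
        have hyAj : y ∈ A j := by
          by_contra hcc; exact hc (hy j hj hcc)
        exact Set.disjoint_left.mp (hdisj i₀ hi₀s j hj (Ne.symm hne)) hyA hyAj
      rw [Finset.sum_eq_single_of_mem i₀ hi₀s hz,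
        Finset.sum_eq_single_of_mem i₀ hi₀s]
      intro j hj hne
      rw [hz j hj hne]
      simp [ENNReal.zero_rpow_of_pos hpr]
  have hint : ∫⁻ y, (‖(↑(∑ i ∈ s, g i) : Y → ℂ) y‖₊ : ℝ≥0∞) ^ p.toReal ∂ν
      = ∑ i ∈ s, ∫⁻ y, (‖(g i : Y → ℂ) y‖₊ : ℝ≥0∞) ^ p.toReal ∂ν := by
    rw [lintegral_congr_ae key]
    exact lintegral_finset_sum' s fun i _ =>
      ((AEStronglyMeasurable.enorm (Lp.aestronglyMeasurable (g i))).pow_const _)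
  rw [aux_norm_pow_eq hp0 hp, hint, ENNReal.toReal_sum]
  · exact Finset.sum_congr rfl fun i _ => (aux_norm_pow_eq hp0 hp (g i)).symm
  · intro i _
    rw [aux_lintegral_eq hp0 hp]
    exact ENNReal.rpow_ne_top_of_nonneg hpr.le (Lp.eLpNorm_ne_top (g i))

end Aux

/-- If `w = m_h ∘ u_S` where `S` has arbitrarily long strings, then for every finitely
supported `f : ℤ → ℂ`, the operator `∑ₙ f(n) wⁿ` on `L^p(Y,ν)` dominates in norm the
convolution operator `λ_p(f)` on `ℓ^p(ℤ)`. -/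
theorem norm_dominates_convolution_norm
    {Y : Type*} [MeasurableSpace Y] (ν : Measure Y) [SigmaFinite ν]
    (hY : ν Set.univ ≠ 0)
    (p : ℝ≥0∞) [Fact (1 ≤ p)] (hp : p ≠ ∞)
    (S : Y ≃ Y) (hS : Measurable S) (hS' : Measurable S.symm)
    (hnull : ∀ F : Set Y, MeasurableSet F → (ν (⇑S ⁻¹' F) = 0 ↔ ν F = 0))
    (hstrings : ∀ n : ℕ, ∃ E : Set Y, MeasurableSet E ∧ 0 < ν E ∧ ν E ≠ ∞ ∧
      ∀ i j : Fin n, i ≠ j →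
        Disjoint ((⇑S)^[(i : ℕ)] ⁻¹' E) ((⇑S)^[(j : ℕ)] ⁻¹' E))
    (h : Y → ℂ) (hmeas : Measurable h) (hmod : ∀ y, ‖h y‖ = 1)
    (w : Lp ℂ p ν ≃ₗᵢ[ℂ] Lp ℂ p ν)
    (hw : ∀ g : Lp ℂ p ν, ∀ᵐ y ∂ν,
      w g y = h y * (((ν.map S).rnDeriv ν y).toReal ^ (1 / p.toReal) • g (S.symm y)))
    (f : ℤ →₀ ℂ)
    (L : lp (fun _ : ℤ => ℂ) p →L[ℂ] lp (fun _ : ℤ => ℂ) p)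
    (hL : ∀ (ξ : lp (fun _ : ℤ => ℂ) p) (m : ℤ),
      L ξ m = ∑' n : ℤ, f n * ξ (m - n)) :
    ‖L‖ ≤ ‖∑ n ∈ f.support, f n •
      (((w ^ n).toContinuousLinearEquiv :
        Lp ℂ p ν ≃L[ℂ] Lp ℂ p ν) : Lp ℂ p ν →L[ℂ] Lp ℂ p ν)‖ := by
  classical
  have hp0 : p ≠ 0 := (lt_of_lt_of_le zero_lt_one Fact.out).ne'
  have hpr : 0 < p.toReal := ENNReal.toReal_pos hp0 hp
  set T : Lp ℂ p ν →L[ℂ] Lp ℂ p ν := ∑ n ∈ f.support, f n •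
      (((w ^ n).toContinuousLinearEquiv :
        Lp ℂ p ν ≃L[ℂ] Lp ℂ p ν) : Lp ℂ p ν →L[ℂ] Lp ℂ p ν) with hTdef
  -- T applied
  have hT_apply : ∀ u : Lp ℂ p ν, T u = ∑ n ∈ f.support, f n • (w ^ n) u := by
    intro u
    rw [hTdef, ContinuousLinearMap.sum_apply]
    rfl
  -- null set pullback under S.symm
  have nullSymm : ∀ Z : Set Y, ν Z = 0 → ν (⇑S.symm ⁻¹' Z) = 0 := by
    intro Z hZ
    obtain ⟨F, hZF, hFmeas, hF0⟩ := exists_measurable_superset_of_null hZ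
    have hpre : ⇑S ⁻¹' (⇑S.symm ⁻¹' F) = F := by
      ext x; simp
    have : ν (⇑S.symm ⁻¹' F) = 0 :=
      (hnull (⇑S.symm ⁻¹' F) (hFmeas.preimage hS')).mp (by rw [hpre]; exact hF0)
    exact measure_mono_null (Set.preimage_mono hZF) this
  -- support propagation through w
  have hstep : ∀ (g : Lp ℂ p ν) (A' : Set Y), (∀ᵐ y ∂ν, y ∉ A' → (g : Y → ℂ) y = 0) →
      ∀ᵐ y ∂ν, y ∉ ⇑S.symm ⁻¹' A' → ((w g : Lp ℂ p ν) : Y → ℂ) y = 0 := by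
    intro g A' hg
    have hpull : ∀ᵐ y ∂ν, (S.symm y ∉ A' → (g : Y → ℂ) (S.symm y) = 0) := by
      rw [ae_iff] at hg ⊢
      have : {y | ¬(S.symm y ∉ A' → (g : Y → ℂ) (S.symm y) = 0)}
          = ⇑S.symm ⁻¹' {y | ¬(y ∉ A' → (g : Y → ℂ) y = 0)} := rfl
      rw [this]
      exact nullSymm _ hg
    filter_upwards [hw g, hpull] with y h1 h2 h3
    rw [h1, h2 h3]
    simp
  -- the key estimate for finitely supported ξ
  have key : ∀ (ξ : lp (fun _ : ℤ => ℂ) p) (J : Finset ℤ),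
      (∀ m ∉ J, ξ m = 0) → ‖L ξ‖ ≤ ‖T‖ * ‖ξ‖ := by
    intro ξ J hξJ
    by_cases hξ0 : ξ = 0
    · simp [hξ0, mul_nonneg (norm_nonneg T) (norm_nonneg (0 : lp (fun _ : ℤ => ℂ) p))]
    -- J is nonempty
    have hJne : J.Nonempty := by
      by_contra hc
      apply hξ0
      apply lp.ext
      funext m
      have : m ∉ J := fun hm => hc ⟨m, hm⟩
      simpa using hξJ m this
    set F : Finset ℤ := f.support with hFdef
    set W : Finset ℤ := F + J with hWdef
    set U : Finset ℤ := J ∪ W with hUdef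
    have hUne : U.Nonempty := Finset.Nonempty.inl hJne
    set a : ℤ := U.min' hUne with hadef
    set b : ℤ := U.max' hUne with hbdef
    set N : ℕ := (b - a).toNat + 1 with hNdef
    have hmemU : ∀ m ∈ U, a ≤ m ∧ m ≤ b := fun m hm =>
      ⟨U.min'_le m hm, U.le_max' m hm⟩
    -- strings
    obtain ⟨E, hEmeas, hEpos, hEfin, hEdisj⟩ := hstrings N
    set D : ℕ → Set Y := fun i => (⇑S)^[i] ⁻¹' E with hDdef
    have hDmeas : ∀ i, MeasurableSet (D i) := fun i => hEmeas.preimage (hS.iterate i)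
    have hDpos : ∀ i, ν (D i) ≠ 0 := by
      intro i
      induction i with
      | zero => simpa [hDdef] using hEpos.ne'
      | succ i ih =>
          intro hc
          apply ih
          have hset : D (i + 1) = ⇑S ⁻¹' D i := by
            rw [hDdef]
            simp only [Function.iterate_succ, Set.preimage_comp]
          exact (hnull (D i) (hDmeas i)).mp (by rw [← hset]; exact hc)
    have hDdisj : ∀ i j : ℕ, i < N → j < N → i ≠ j → Disjoint (D i) (D j) := by
      intro i j hi hj hij
      exact hEdisj ⟨i, hi⟩ ⟨j, hj⟩ (fun hc => hij (congrArg Fin.val hc))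
    obtain ⟨A, hAmeas, hAsub, hApos, hAfin⟩ :=
      Measure.exists_subset_measure_lt_top (hDmeas (N - 1))
        (pos_iff_ne_zero.mpr (hDpos (N - 1)))
    set φ : Lp ℂ p ν := indicatorConstLp p hAmeas hAfin.ne (1 : ℂ) with hφdef
    have hφpos : 0 < ‖φ‖ := by
      rw [hφdef, norm_indicatorConstLp hp0 hp]
      have h1 : (0:ℝ) < (ν A).toReal := ENNReal.toReal_pos hApos.ne' hAfin.ne
      have := Real.rpow_pos_of_pos h1 (1 / p.toReal)
      simpa [measureReal_def] using this
    have hφsupp : ∀ᵐ y ∂ν, y ∉ A → (φ : Y → ℂ) y = 0 := by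
      filter_upwards [indicatorConstLp_coeFn (p := p) (hs := hAmeas)
        (hμs := hAfin.ne) (c := (1:ℂ))] with y hy hyA
      rw [hy]
      exact Set.indicator_of_notMem hyA _
    set B : ℕ → Set Y := fun k => (⇑S.symm)^[k] ⁻¹' A with hBdef
    set ψ : ℕ → Lp ℂ p ν := fun k => (w ^ k) φ with hψdef
    have hψnorm : ∀ k, ‖ψ k‖ = ‖φ‖ := fun k => (w ^ k).norm_map φ
    have hψsupp : ∀ k, ∀ᵐ y ∂ν, y ∉ B k → ((ψ k : Lp ℂ p ν) : Y → ℂ) y = 0 := by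
      intro k
      induction k with
      | zero =>
          have h1 : ψ 0 = φ := by rw [hψdef]; simp
          have h2 : B 0 = A := by rw [hBdef]; simp
          rw [h1, h2]; exact hφsupp
      | succ k ih =>
          have h1 : ψ (k + 1) = w (ψ k) := by
            rw [hψdef]
            simp only [pow_succ']
            rfl
          have h2 : B (k + 1) = ⇑S.symm ⁻¹' B k := by
            rw [hBdef]
            simp only [Function.iterate_succ, Set.preimage_comp]
          rw [h1, h2]
          exact hstep (ψ k) (B k) ih
    -- B k ⊆ D (N-1-k)
    have hBD : ∀ k, k < N → B k ⊆ D (N - 1 - k) := by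
      intro k hk y hy
      have hyA : (⇑S.symm)^[k] y ∈ A := hy
      have hyD : (⇑S)^[N-1] ((⇑S.symm)^[k] y) ∈ E := hAsub hyA
      have hcomp : (⇑S)^[N-1] ((⇑S.symm)^[k] y) = (⇑S)^[N-1-k] y := by
        have hsplit : N - 1 = (N - 1 - k) + k := by omega
        calc (⇑S)^[N-1] ((⇑S.symm)^[k] y)
            = (⇑S)^[(N-1-k)+k] ((⇑S.symm)^[k] y) := by rw [← hsplit]
          _ = (⇑S)^[N-1-k] ((⇑S)^[k] ((⇑S.symm)^[k] y)) :=
              Function.iterate_add_apply _ _ _ _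
          _ = (⇑S)^[N-1-k] y := by
              rw [(Function.LeftInverse.iterate (fun x => S.apply_symm_apply x) k) y]
      rw [hcomp] at hyD
      exact hyD
    have hBdisj : ∀ k l : ℕ, k < N → l < N → k ≠ l → Disjoint (B k) (B l) := by
      intro k l hk hl hkl
      refine Set.disjoint_of_subset (hBD k hk) (hBD l hl) ?_
      exact hDdisj _ _ (by omega) (by omega) (by omega)
    -- index function
    set κ : ℤ → ℕ := fun m => (m - a).toNat with hκdef
    have hκlt : ∀ m ∈ U, κ m < N := by
      intro m hm
      obtain ⟨h1, h2⟩ := hmemU m hm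
      simp only [hκdef, hNdef]
      omega
    have hκinj : ∀ m ∈ U, ∀ m' ∈ U, m ≠ m' → κ m ≠ κ m' := by
      intro m hm m' hm' hne
      obtain ⟨h1, _⟩ := hmemU m hm
      obtain ⟨h1', _⟩ := hmemU m' hm'
      simp only [hκdef]
      omega
    have hJU : J ⊆ U := Finset.subset_union_left
    have hWU : W ⊆ U := Finset.subset_union_right
    -- the test function g
    set g : Lp ℂ p ν := ∑ j ∈ J, ξ j • ψ (κ j) with hgdef
    -- computations of powers of w
    have hwpow : ∀ n ∈ F, ∀ j ∈ J, (w ^ n) (ψ (κ j)) = ψ (κ (n + j)) := by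
      intro n hn j hj
      have hjU : j ∈ U := hJU hj
      have hnjW : n + j ∈ W := by
        rw [hWdef]
        exact Finset.add_mem_add hn hj
      have hnjU : n + j ∈ U := hWU hnjW
      have haj : a ≤ j := (hmemU j hjU).1
      have hanj : a ≤ n + j := (hmemU (n + j) hnjU).1
      have e1 : ((κ j : ℤ)) = j - a := by simp only [hκdef]; omega
      have e2 : ((κ (n + j) : ℤ)) = n + j - a := by simp only [hκdef]; omega
      have : (w ^ n) (ψ (κ j)) = (w ^ (n + (κ j : ℤ))) φ := by
        simp only [hψdef]
        rw [← zpow_natCast w (κ j), zpow_add]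
        rfl
      rw [this]
      have e3 : n + (κ j : ℤ) = ((κ (n + j) : ℤ)) := by rw [e1, e2]; ring
      rw [e3, zpow_natCast]
    -- T g computation
    have hTg : T g = ∑ m ∈ W, L ξ m • ψ (κ m) := by
      have hLξm : ∀ m : ℤ, L ξ m = ∑ n ∈ F, f n * ξ (m - n) := by
        intro m
        rw [hL ξ m]
        apply tsum_eq_sum
        intro n hn
        rw [Finsupp.notMem_support_iff.mp hn, zero_mul]
      rw [hT_apply g, hgdef]
      have hstep1 : ∀ n ∈ F, (w ^ n) (∑ j ∈ J, ξ j • ψ (κ j))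
          = ∑ j ∈ J, ξ j • ψ (κ (n + j)) := by
        intro n hn
        rw [map_sum]
        refine Finset.sum_congr rfl fun j hj => ?_
        rw [_root_.map_smul, hwpow n hn j hj]
      calc ∑ n ∈ F, f n • (w ^ n) (∑ j ∈ J, ξ j • ψ (κ j))
          = ∑ n ∈ F, ∑ j ∈ J, (f n * ξ j) • ψ (κ (n + j)) := by
            refine Finset.sum_congr rfl fun n hn => ?_
            rw [hstep1 n hn, Finset.smul_sum]
            refine Finset.sum_congr rfl fun j hj => ?_
            rw [smul_smul]
        _ = ∑ n ∈ F, ∑ m ∈ W, (f n * ξ (m - n)) • ψ (κ m) := by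
            refine Finset.sum_congr rfl fun n hn => ?_
            have himg : J.image (fun j => n + j) ⊆ W := by
              intro m hm
              obtain ⟨j, hj, rfl⟩ := Finset.mem_image.mp hm
              exact Finset.add_mem_add hn hj
            rw [← Finset.sum_subset himg (fun m hmW hmimg => ?_)]
            · rw [Finset.sum_image (fun x _ y _ hxy => by omega)]
              refine Finset.sum_congr rfl fun j hj => ?_
              have hxx : n + j - n = j := by ring
              rw [hxx]
            · suffices hz : ξ (m - n) = 0 by rw [hz, mul_zero, zero_smul]
              refine hξJ _ fun hc => hmimg ?_
              exact Finset.mem_image.mpr ⟨m - n, hc, by ring⟩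
        _ = ∑ m ∈ W, (∑ n ∈ F, f n * ξ (m - n)) • ψ (κ m) := by
            rw [Finset.sum_comm]
            exact Finset.sum_congr rfl fun m hm => (Finset.sum_smul).symm
        _ = ∑ m ∈ W, L ξ m • ψ (κ m) := by
            refine Finset.sum_congr rfl fun m hm => ?_
            rw [hLξm m]
    -- norms via disjoint supports
    have hsmulsupp : ∀ (c : ℂ) (k : ℕ), ∀ᵐ y ∂ν, y ∉ B k →
        ((c • ψ k : Lp ℂ p ν) : Y → ℂ) y = 0 := by
      intro c k
      filter_upwards [Lp.coeFn_smul c (ψ k), hψsupp k] with y h1 h2 h3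
      rw [h1, Pi.smul_apply, h2 h3, smul_zero]
    have hg_norm : ‖g‖ ^ p.toReal = (∑ j ∈ J, ‖ξ j‖ ^ p.toReal) * ‖φ‖ ^ p.toReal := by
      rw [hgdef, aux_disjoint_sum hp0 hp J _ (fun j => B (κ j))
        (fun i hi j hj hij => hBdisj _ _ (hκlt i (hJU hi)) (hκlt j (hJU hj))
          (hκinj i (hJU hi) j (hJU hj) hij))
        (fun j _ => hsmulsupp (ξ j) (κ j)), Finset.sum_mul]
      refine Finset.sum_congr rfl fun j hj => ?_
      rw [norm_smul, hψnorm, Real.mul_rpow (norm_nonneg _) (norm_nonneg _)]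
    have hTg_norm : ‖T g‖ ^ p.toReal
        = (∑ m ∈ W, ‖L ξ m‖ ^ p.toReal) * ‖φ‖ ^ p.toReal := by
      rw [hTg, aux_disjoint_sum hp0 hp W _ (fun m => B (κ m))
        (fun i hi j hj hij => hBdisj _ _ (hκlt i (hWU hi)) (hκlt j (hWU hj))
          (hκinj i (hWU hi) j (hWU hj) hij))
        (fun m _ => hsmulsupp (L ξ m) (κ m)), Finset.sum_mul]
      refine Finset.sum_congr rfl fun m hm => ?_
      rw [norm_smul, hψnorm, Real.mul_rpow (norm_nonneg _) (norm_nonneg _)]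
    have hξnorm : ‖ξ‖ ^ p.toReal = ∑ j ∈ J, ‖ξ j‖ ^ p.toReal := by
      rw [lp.norm_rpow_eq_tsum hpr ξ]
      exact tsum_eq_sum fun m hm => by
        rw [hξJ m hm, norm_zero, Real.zero_rpow hpr.ne']
    have hLW : ∀ m ∉ W, L ξ m = 0 := by
      intro m hm
      rw [hL ξ m]
      have hz : ∀ n : ℤ, f n * ξ (m - n) = 0 := by
        intro n
        by_cases hn : n ∈ F
        · have hmn : m - n ∉ J := by
            intro hc
            apply hm
            have hmem : n + (m - n) ∈ F + J := Finset.add_mem_add hn hc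
            have he : n + (m - n) = m := by ring
            rw [he] at hmem
            exact hmem
          rw [hξJ _ hmn, mul_zero]
        · rw [Finsupp.notMem_support_iff.mp hn, zero_mul]
      calc (∑' n : ℤ, f n * ξ (m - n)) = ∑' _ : ℤ, (0 : ℂ) := tsum_congr hz
        _ = 0 := tsum_zero
    have hLξnorm : ‖L ξ‖ ^ p.toReal = ∑ m ∈ W, ‖L ξ m‖ ^ p.toReal := by
      rw [lp.norm_rpow_eq_tsum hpr (L ξ)]
      exact tsum_eq_sum fun m hm => by
        rw [hLW m hm, norm_zero, Real.zero_rpow hpr.ne']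
    -- main chain
    have h1 : ‖T g‖ ^ p.toReal ≤ (‖T‖ * ‖g‖) ^ p.toReal :=
      Real.rpow_le_rpow (norm_nonneg _) (T.le_opNorm g) hpr.le
    rw [hTg_norm, Real.mul_rpow (norm_nonneg T) (norm_nonneg g), hg_norm,
      ← hξnorm, ← mul_assoc] at h1
    have hφpr : 0 < ‖φ‖ ^ p.toReal := Real.rpow_pos_of_pos hφpos _
    have h2 : ∑ m ∈ W, ‖L ξ m‖ ^ p.toReal ≤ ‖T‖ ^ p.toReal * ‖ξ‖ ^ p.toReal := by
      have h1' : (∑ m ∈ W, ‖L ξ m‖ ^ p.toReal) * ‖φ‖ ^ p.toReal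
          ≤ (‖T‖ ^ p.toReal * ‖ξ‖ ^ p.toReal) * ‖φ‖ ^ p.toReal := h1
      exact (mul_le_mul_iff_of_pos_right hφpr).mp h1'
    have h3 : ‖L ξ‖ ^ p.toReal ≤ (‖T‖ * ‖ξ‖) ^ p.toReal := by
      rw [hLξnorm, Real.mul_rpow (norm_nonneg T) (norm_nonneg ξ)]
      exact h2
    exact (Real.rpow_le_rpow_iff (norm_nonneg _)
      (mul_nonneg (norm_nonneg T) (norm_nonneg ξ)) hpr).mp h3
  -- density argument
  refine L.opNorm_le_bound (norm_nonneg T) fun ξ => ?_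
  have hsum := lp.hasSum_single hp ξ
  have hb : ∀ s : Finset ℤ, ‖L (∑ i ∈ s, lp.single p i (ξ i))‖
      ≤ ‖T‖ * ‖∑ i ∈ s, lp.single p i (ξ i)‖ := by
    intro s
    refine key _ s fun m hm => ?_
    have := lp.coeFn_sum (fun i => lp.single p i (ξ i)) s
    rw [this]
    rw [Finset.sum_apply]
    refine Finset.sum_eq_zero fun i hi => ?_
    rw [lp.single_apply]
    rw [Pi.single_apply, if_neg]
    intro hc
    exact hm (hc ▸ hi)
  have h1 : Filter.Tendsto (fun s : Finset ℤ => ‖L (∑ i ∈ s, lp.single p i (ξ i))‖)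
      Filter.atTop (nhds ‖L ξ‖) :=
    ((L.continuous.tendsto ξ).comp hsum).norm
  have h2 : Filter.Tendsto (fun s : Finset ℤ => ‖T‖ * ‖∑ i ∈ s, lp.single p i (ξ i)‖)
      Filter.atTop (nhds (‖T‖ * ‖ξ‖)) :=
    (hsum.norm).const_mul _
  exact le_of_tendsto_of_tendsto' h1 h2 hb
end
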